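/- Let A be a finite set of integers that is a Sidon set of order h (i.e., every integer has at most one representation as a sum of h elements of A, up to reordering), and let d = max{|a| : a ∈ A}. If c is an integer with |c| > (2h−1)d, then A ∪ {c} is also a Sidon set of order h. -/

import Mathlib

/-- The representation function of order `h` of `A ⊆ ℤ`: the number of
nondecreasing `h`-tuples of elements of `A` with sum `n`, valued in `ℕ∞`. -/
noncomputable def repFn (A : Set ℤ) (h : ℕ) (n : ℤ) : ℕ∞ :=
  {g : Fin h → ℤ | Monotone g ∧ (∀ i, g i ∈ A) ∧ ∑ i, g i = n}.encard

private lemma abs_msum_le (d : ℤ) (T : Multiset ℤ) (hT : ∀ x ∈ T, |x| ≤ d) :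
    |T.sum| ≤ (Multiset.card T : ℤ) * d := by
  induction T using Multiset.induction with
  | empty => simp
  | cons a s ih =>
    simp only [Multiset.sum_cons, Multiset.card_cons]
    have h1 : |a| ≤ d := hT a (Multiset.mem_cons_self a s)
    have h2 : |s.sum| ≤ (Multiset.card s : ℤ) * d :=
      ih (fun x hx => hT x (Multiset.mem_cons_of_mem hx))
    calc |a + s.sum| ≤ |a| + |s.sum| := abs_add_le _ _
      _ ≤ d + (Multiset.card s : ℤ) * d := add_le_add h1 h2
      _ = ((Multiset.card s + 1 : ℕ) : ℤ) * d := by push_cast; ring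

private lemma exists_monotone (h : ℕ) (S : Multiset ℤ) (hcard : Multiset.card S = h) :
    ∃ g : Fin h → ℤ, Monotone g ∧ Multiset.map g Finset.univ.val = S := by
  have hl : (S.sort (· ≤ ·)).length = h := by rw [Multiset.length_sort, hcard]
  subst hl
  refine ⟨(S.sort (· ≤ ·)).get, ?_, ?_⟩
  · rw [← List.sortedLE_ofFn_iff, List.ofFn_get]
    exact (S.pairwise_sort _).sortedLE
  · rw [Fin.univ_val_map, List.ofFn_get, Multiset.sort_eq]

private lemma monotone_eq {h : ℕ} {g g' : Fin h → ℤ} (hg : Monotone g) (hg' : Monotone g')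
    (he : Multiset.map g Finset.univ.val = Multiset.map g' Finset.univ.val) : g = g' := by
  rw [Fin.univ_val_map, Fin.univ_val_map, Multiset.coe_eq_coe] at he
  exact List.ofFn_injective (List.Perm.eq_of_sortedLE hg.sortedLE_ofFn hg'.sortedLE_ofFn he)

private lemma ms_sidon {A : Set ℤ} {h : ℕ} (hSidon : ∀ n : ℤ, repFn A h n ≤ 1)
    (S S' : Multiset ℤ) (hS : Multiset.card S = h) (hS' : Multiset.card S' = h)
    (hSA : ∀ x ∈ S, x ∈ A) (hS'A : ∀ x ∈ S', x ∈ A) (hsum : S.sum = S'.sum) : S = S' := by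
  obtain ⟨g, hg, hgS⟩ := exists_monotone h S hS
  obtain ⟨g', hg', hgS'⟩ := exists_monotone h S' hS'
  have hsum1 : ∑ i, g i = S.sum := by
    rw [Finset.sum_eq_multiset_sum, hgS]
  have hsum2 : ∑ i, g' i = S.sum := by
    rw [Finset.sum_eq_multiset_sum, hgS', hsum]
  have key := hSidon S.sum
  rw [repFn, Set.encard_le_one_iff] at key
  have hmem : ∀ i, g i ∈ A := fun i =>
    hSA _ (by rw [← hgS]; exact Multiset.mem_map_of_mem _ (Finset.mem_univ_val i))
  have hmem' : ∀ i, g' i ∈ A := fun i =>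
    hS'A _ (by rw [← hgS']; exact Multiset.mem_map_of_mem _ (Finset.mem_univ_val i))
  have : g = g' := key g g' ⟨hg, hmem, hsum1⟩ ⟨hg', hmem', hsum2⟩
  rw [← hgS, ← hgS', this]

private lemma ms_sidon_le {A : Set ℤ} {h : ℕ} (hSidon : ∀ n : ℤ, repFn A h n ≤ 1)
    {a0 : ℤ} (ha0 : a0 ∈ A) (T T' : Multiset ℤ)
    (hcard : Multiset.card T = Multiset.card T') (hle : Multiset.card T ≤ h)
    (hTA : ∀ x ∈ T, x ∈ A) (hT'A : ∀ x ∈ T', x ∈ A) (hsum : T.sum = T'.sum) : T = T' := by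
  set R := Multiset.replicate (h - Multiset.card T) a0 with hR
  have hRA : ∀ x ∈ R, x ∈ A := fun x hx => (Multiset.eq_of_mem_replicate hx) ▸ ha0
  have key := ms_sidon hSidon (T + R) (T' + R) ?_ ?_ ?_ ?_ ?_
  · exact add_right_cancel key
  · simp [hR, Multiset.card_replicate, Nat.add_sub_cancel' hle]
  · simp [hR, Multiset.card_replicate, ← hcard, Nat.add_sub_cancel' hle]
  · intro x hx
    rcases Multiset.mem_add.1 hx with h1 | h1
    exacts [hTA x h1, hRA x h1]
  · intro x hx
    rcases Multiset.mem_add.1 hx with h1 | h1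
    exacts [hT'A x h1, hRA x h1]
  · simp [hsum]

/-- Lemma 2: if `A` is a finite Sidon set of order `h` with `d = max{|a| : a ∈ A}`
and `|c| > (2h−1)d`, then `A ∪ {c}` is a Sidon set of order `h`. -/
theorem sidon_insert (A : Set ℤ) (hA : A.Finite) (h : ℕ) (hh : 0 < h)
    (hSidon : ∀ n : ℤ, repFn A h n ≤ 1)
    (d : ℤ) (hd : IsGreatest ((fun a : ℤ => |a|) '' A) d)
    (c : ℤ) (hc : (2 * h - 1 : ℤ) * d < |c|) :
    ∀ n : ℤ, repFn (A ∪ {c}) h n ≤ 1 := by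
  -- basic facts
  obtain ⟨a0, ha0, ha0d⟩ := hd.1
  have hdnn : (0:ℤ) ≤ d := ha0d ▸ abs_nonneg a0
  have habs : ∀ x ∈ A, |x| ≤ d := fun x hx => hd.2 ⟨x, hx, rfl⟩
  have hh1 : (1:ℤ) ≤ (h:ℤ) := by exact_mod_cast hh
  have hcA : c ∉ A := by
    intro hcmem
    have h1 : |c| ≤ d := habs c hcmem
    nlinarith
  intro n
  rw [repFn, Set.encard_le_one_iff]
  rintro g g' ⟨hg, hgA, hgsum⟩ ⟨hg', hg'A, hg'sum⟩
  classical
  set S := Multiset.map g Finset.univ.val with hSdef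
  set S' := Multiset.map g' Finset.univ.val with hS'def
  have hScard : Multiset.card S = h := by simp [hSdef]
  have hS'card : Multiset.card S' = h := by simp [hS'def]
  have hSsum : S.sum = n := by rw [← hgsum, Finset.sum_eq_multiset_sum]
  have hS'sum : S'.sum = n := by rw [← hg'sum, Finset.sum_eq_multiset_sum]
  have hSmem : ∀ x ∈ S, x ∈ A ∪ {c} := by
    intro x hx
    obtain ⟨i, _, rfl⟩ := Multiset.mem_map.1 hx
    exact hgA i
  have hS'mem : ∀ x ∈ S', x ∈ A ∪ {c} := by
    intro x hx
    obtain ⟨i, _, rfl⟩ := Multiset.mem_map.1 hx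
    exact hg'A i
  set j := S.count c with hj
  set k := S'.count c with hk
  set T := S.filter (fun x => ¬ x = c) with hT
  set T' := S'.filter (fun x => ¬ x = c) with hT'
  have hSdec : Multiset.replicate j c + T = S := by
    rw [hj, hT, ← Multiset.filter_eq' S c]
    exact Multiset.filter_add_not _ S
  have hS'dec : Multiset.replicate k c + T' = S' := by
    rw [hk, hT', ← Multiset.filter_eq' S' c]
    exact Multiset.filter_add_not _ S'
  have hTA : ∀ x ∈ T, x ∈ A := by
    intro x hx
    have h1 := Multiset.mem_filter.1 hx
    rcases hSmem x h1.1 with h2 | h2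
    · exact h2
    · exact absurd h2 h1.2
  have hT'A : ∀ x ∈ T', x ∈ A := by
    intro x hx
    have h1 := Multiset.mem_filter.1 hx
    rcases hS'mem x h1.1 with h2 | h2
    · exact h2
    · exact absurd h2 h1.2
  have hTcard : j + Multiset.card T = h := by
    rw [← hScard, ← hSdec]; simp
  have hT'card : k + Multiset.card T' = h := by
    rw [← hS'card, ← hS'dec]; simp
  have hTsum : (j:ℤ) * c + T.sum = n := by
    have := congrArg Multiset.sum hSdec
    rw [hSsum] at this
    simpa [Multiset.sum_replicate, nsmul_eq_mul] using this
  have hT'sum : (k:ℤ) * c + T'.sum = n := by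
    have := congrArg Multiset.sum hS'dec
    rw [hS'sum] at this
    simpa [Multiset.sum_replicate, nsmul_eq_mul] using this
  have hTabs : |T.sum| ≤ (Multiset.card T : ℤ) * d :=
    abs_msum_le d T (fun x hx => habs x (hTA x hx))
  have hT'abs : |T'.sum| ≤ (Multiset.card T' : ℤ) * d :=
    abs_msum_le d T' (fun x hx => habs x (hT'A x hx))
  -- same number of copies of c
  have hjk : j = k := by
    by_contra hne
    have h1 : (1:ℤ) ≤ |(k:ℤ) - j| := by
      have h0 : ((k:ℤ) - j) ≠ 0 := sub_ne_zero.2 (by exact_mod_cast (Ne.symm hne))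
      have := abs_pos.2 h0
      omega
    have heq : ((k:ℤ) - j) * c = T.sum - T'.sum := by linarith
    have h2 : |c| ≤ |T.sum - T'.sum| := by
      calc |c| = 1 * |c| := (one_mul _).symm
        _ ≤ |(k:ℤ) - j| * |c| := mul_le_mul_of_nonneg_right h1 (abs_nonneg c)
        _ = |((k:ℤ) - j) * c| := (abs_mul _ _).symm
        _ = |T.sum - T'.sum| := by rw [heq]
    have h3 : |T.sum - T'.sum| ≤ (Multiset.card T : ℤ) * d + (Multiset.card T' : ℤ) * d :=
      (abs_sub _ _).trans (add_le_add hTabs hT'abs)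
    have hjk1 : 1 ≤ j + k := by omega
    have hcT : (j:ℤ) + Multiset.card T = h := by exact_mod_cast hTcard
    have hcT' : (k:ℤ) + Multiset.card T' = h := by exact_mod_cast hT'card
    have hjk1' : (1:ℤ) ≤ (j:ℤ) + k := by exact_mod_cast hjk1
    nlinarith [mul_nonneg (sub_nonneg.2 hjk1') hdnn]
  -- hence the A-parts coincide
  have hTT'sum : T.sum = T'.sum := by rw [hjk] at hTsum; linarith
  have hTT'card : Multiset.card T = Multiset.card T' := by omega
  have hTle : Multiset.card T ≤ h := by omega
  have hTT' : T = T' := ms_sidon_le hSidon ha0 T T' hTT'card hTle hTA hT'A hTT'sum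
  have hSS' : S = S' := by rw [← hSdec, ← hS'dec, hjk, hTT']
  exact monotone_eq hg hg' hSS'
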